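/- arXiv:1503.04411 — 5 statements merged into one kernel-verified Lean document; each statement's English description precedes it below -/
import Mathlib

section
/- Fix ε > 0 with ε ≠ 1, fix θ₂ ∈ (0, ε), and set θ₁ := θ₂/4. Then there exists a constant C > 0, depending only on ε and θ₂, such that for every integer j ≤ 0, every h ∈ (1/10, 1], and every ξ' ∈ ℝ with |ξ'| ≥ 2^{θ₁ j}, the set E_{h, ξ'} := { η ∈ (1/2, 5/2) : hη − ξ' ∈ (1/2, 5/2) and |η^{ε−1} − h·(hη − ξ')^{ε−1}| ≤ 2^{θ₂ j} } has Lebesgue measure at most C · 2^{θ₂ j / 2}. -/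
set_option maxHeartbeats 1000000

open MeasureTheory Filter Set
open scoped ENNReal Topology

theorem stmt_12 (ε θ₂ : ℝ) (hε : 0 < ε) (hε1 : ε ≠ 1) (hθ₂ : θ₂ ∈ Set.Ioo 0 ε) :
    ∃ C : ℝ, 0 < C ∧
      ∀ j : ℤ, j ≤ 0 → ∀ h : ℝ, h ∈ Set.Ioc (1 / 10 : ℝ) 1 →
        ∀ ξ' : ℝ, (2 : ℝ) ^ ((θ₂ / 4) * (j : ℝ)) ≤ |ξ'| →
          volume {η : ℝ | η ∈ Set.Ioo (1 / 2 : ℝ) (5 / 2) ∧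
              h * η - ξ' ∈ Set.Ioo (1 / 2 : ℝ) (5 / 2) ∧
              |η ^ (ε - 1) - h * (h * η - ξ') ^ (ε - 1)| ≤ (2 : ℝ) ^ (θ₂ * (j : ℝ))}
            ≤ ENNReal.ofReal (C * (2 : ℝ) ^ (θ₂ * (j : ℝ) / 2)) := by
  obtain ⟨hθpos, hθε⟩ := hθ₂
  set a : ℝ := ε - 1 with ha_def
  have ha : a ≠ 0 := sub_ne_zero.mpr hε1
  have haabs : 0 < |a| := abs_pos.mpr ha
  set m₁ : ℝ := min ((1/5 : ℝ) ^ (a - 1)) ((5 : ℝ) ^ (a - 1)) with hm₁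
  have hm₁pos : 0 < m₁ :=
    lt_min (Real.rpow_pos_of_pos (by norm_num) _) (Real.rpow_pos_of_pos (by norm_num) _)
  set M : ℝ := max ((1/2 : ℝ) ^ (-a)) ((5/2 : ℝ) ^ (-a)) with hM
  have hMpos : 0 < M :=
    lt_max_of_lt_left (Real.rpow_pos_of_pos (by norm_num) _)
  set lam : ℝ := (1/10) * |a| * m₁ * (4/25) with hlam
  have hlampos : 0 < lam := by positivity
  refine ⟨4 * M / lam, by positivity, ?_⟩
  intro j hj h hh ξ' hξ
  have hjr : (j : ℝ) ≤ 0 := by exact_mod_cast hj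
  obtain ⟨hh1, hh2⟩ := hh
  have hh0 : 0 < h := by linarith
  set δ : ℝ := (2 : ℝ) ^ (θ₂ * (j : ℝ)) with hδ
  have hδpos : 0 < δ := Real.rpow_pos_of_pos two_pos _
  have hξpos : 0 < |ξ'| := lt_of_lt_of_le (Real.rpow_pos_of_pos two_pos _) hξ
  set E := {η : ℝ | η ∈ Set.Ioo (1/2 : ℝ) (5/2) ∧
      h * η - ξ' ∈ Set.Ioo (1/2 : ℝ) (5/2) ∧
      |η ^ a - h * (h * η - ξ') ^ a| ≤ δ} with hE
  set ℓ : ℝ := 2 * M * δ / (lam * |ξ'|) with hℓ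
  have hℓ0 : 0 ≤ ℓ := by positivity
  set G : ℝ → ℝ := fun s => 1 - h * ((h * s - ξ') / s) ^ a with hGdef
  set G' : ℝ → ℝ := fun s => -(h * (ξ' / s ^ 2 * a * ((h * s - ξ') / s) ^ (a - 1))) with hG'def
  -- derivative of G
  have hG : ∀ z : ℝ, 1/2 < z → 1/2 < h * z - ξ' → HasDerivAt G (G' z) z := by
    intro z hz1 hu1
    have hz0 : (0:ℝ) < z := by linarith
    have hu0 : (0:ℝ) < h * z - ξ' := by linarith
    have ht : HasDerivAt (fun s : ℝ => (h * s - ξ') / s) (ξ' / z ^ 2) z := by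
      have h1 : HasDerivAt (fun s : ℝ => h * s - ξ') h z := by
        simpa using ((hasDerivAt_id z).const_mul h).sub_const ξ'
      have := h1.fun_div (hasDerivAt_id z) (ne_of_gt hz0)
      refine this.congr_deriv ?_
      show (h * z - (h * z - ξ') * 1) / z ^ 2 = ξ' / z ^ 2
      ring
    have htpos : 0 < (h * z - ξ') / z := div_pos hu0 hz0
    have h2 := (ht.rpow_const (p := a) (Or.inl (ne_of_gt htpos))).const_mul h
    simpa [hGdef, hG'def] using h2.const_sub 1
  -- bound |G| on E
  have hGbound : ∀ z ∈ E, |G z| ≤ M * δ := by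
    intro z hz
    obtain ⟨⟨hz1, hz2⟩, ⟨hu1, hu2⟩, hfz⟩ := hz
    have hz0 : (0:ℝ) < z := by linarith
    have hu0 : (0:ℝ) < h * z - ξ' := by linarith
    have hza : 0 < z ^ a := Real.rpow_pos_of_pos hz0 a
    have hGz : G z = (z ^ a - h * (h * z - ξ') ^ a) / z ^ a := by
      simp only [hGdef]
      rw [Real.div_rpow hu0.le hz0.le]
      field_simp
    have hMz : (z ^ a)⁻¹ ≤ M := by
      rw [← Real.rpow_neg hz0.le]
      rcases le_or_gt 0 (-a) with hb | hb
      · exact le_trans (Real.rpow_le_rpow hz0.le hz2.le hb) (le_max_right _ _)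
      · exact le_trans (Real.rpow_le_rpow_of_nonpos (by norm_num) hz1.le hb.le) (le_max_left _ _)
    rw [hGz, abs_div, abs_of_pos hza, div_eq_mul_inv]
    calc |z ^ a - h * (h * z - ξ') ^ a| * (z ^ a)⁻¹ ≤ δ * M :=
          mul_le_mul hfz hMz (by positivity) hδpos.le
      _ = M * δ := mul_comm _ _
  -- key diameter bound
  have key : ∀ x ∈ E, ∀ y ∈ E, x ≤ y → y - x ≤ ℓ := by
    intro x hx y hy hxy
    rcases eq_or_lt_of_le hxy with rfl | hxy'
    · linarith
    obtain ⟨⟨hx1, hx2⟩, ⟨hux1, hux2⟩, hfx⟩ := hx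
    obtain ⟨⟨hy1, hy2⟩, ⟨huy1, huy2⟩, hfy⟩ := hy
    have hdom : ∀ z ∈ Icc x y, 1/2 < z ∧ z < 5/2 ∧ 1/2 < h * z - ξ' ∧ h * z - ξ' < 5/2 := by
      intro z hz
      obtain ⟨hz1, hz2⟩ := hz
      refine ⟨by linarith, by linarith, ?_, ?_⟩
      · nlinarith
      · nlinarith
    have hderiv : ∀ z ∈ Icc x y, HasDerivAt G (G' z) z := fun z hz =>
      hG z (hdom z hz).1 (hdom z hz).2.2.1
    obtain ⟨c, hc, hceq⟩ := exists_hasDerivAt_eq_slope G G' hxy'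
      (fun z hz => (hderiv z hz).continuousAt.continuousWithinAt)
      (fun z hz => hderiv z (Ioo_subset_Icc_self hz))
    obtain ⟨hc1, hc2, hcu1, hcu2⟩ := hdom c (Ioo_subset_Icc_self hc)
    have hc0 : (0:ℝ) < c := by linarith
    have hcu0 : (0:ℝ) < h * c - ξ' := by linarith
    set tc : ℝ := ((h * c - ξ') / c) ^ (a - 1) with htc_def
    have htcpos : 0 < tc := Real.rpow_pos_of_pos (div_pos hcu0 hc0) _
    have habs : |G' c| = h * (|ξ'| / c ^ 2) * (|a| * tc) := by
      simp only [hG'def, abs_neg, abs_mul, abs_div, abs_of_pos hh0,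
        abs_of_pos (pow_pos hc0 2), ← htc_def, abs_of_pos htcpos]
      ring
    -- lower bound for tc
    have htlb : (1/5 : ℝ) < (h * c - ξ') / c := by
      rw [lt_div_iff₀ hc0]; nlinarith
    have htub : (h * c - ξ') / c < 5 := by
      rw [div_lt_iff₀ hc0]; nlinarith
    have htcm : m₁ ≤ tc := by
      rcases le_or_gt 0 (a - 1) with hb | hb
      · exact le_trans (min_le_left _ _) (Real.rpow_le_rpow (by norm_num) htlb.le hb)
      · exact le_trans (min_le_right _ _)
          (Real.rpow_le_rpow_of_nonpos (div_pos hcu0 hc0) htub.le hb.le)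
    have hclb : |ξ'| / c ^ 2 ≥ |ξ'| * (4/25) := by
      rw [ge_iff_le, div_eq_mul_inv]
      apply mul_le_mul_of_nonneg_left _ (abs_nonneg _)
      have hc25 : c ^ 2 ≤ 25/4 := by nlinarith
      calc (4/25 : ℝ) = ((25:ℝ)/4)⁻¹ := by norm_num
        _ ≤ (c ^ 2)⁻¹ := inv_anti₀ (by positivity) hc25
    have hlower : lam * |ξ'| ≤ |G' c| := by
      rw [habs]
      calc lam * |ξ'| = (1/10) * (|ξ'| * (4/25)) * (|a| * m₁) := by rw [hlam]; ring
        _ ≤ h * (|ξ'| / c ^ 2) * (|a| * tc) := by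
            apply mul_le_mul (mul_le_mul hh1.le hclb (by positivity) hh0.le)
              (mul_le_mul_of_nonneg_left htcm (abs_nonneg a)) (by positivity) (by positivity)
    have hyx0 : y - x ≠ 0 := sub_ne_zero.mpr (ne_of_gt hxy')
    have hGyx : G y - G x = G' c * (y - x) := by
      rw [hceq, div_mul_cancel₀ _ hyx0]
    have h2 : (y - x) * (lam * |ξ'|) ≤ |G y - G x| := by
      rw [hGyx, abs_mul, abs_of_pos (sub_pos.mpr hxy')]
      nlinarith [sub_pos.mpr hxy']
    have h3 : |G y - G x| ≤ 2 * (M * δ) := by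
      calc |G y - G x| ≤ |G y| + |G x| := abs_sub _ _
        _ ≤ 2 * (M * δ) := by
            linarith [hGbound y (by exact ⟨⟨hy1, hy2⟩, ⟨huy1, huy2⟩, hfy⟩),
              hGbound x (by exact ⟨⟨hx1, hx2⟩, ⟨hux1, hux2⟩, hfx⟩)]
    rw [hℓ, le_div_iff₀ (by positivity)]
    linarith
  -- conclude
  rcases Set.eq_empty_or_nonempty E with hne | ⟨x₀, hx₀⟩
  · rw [hne]
    simp
  · have hsub : E ⊆ Icc (x₀ - ℓ) (x₀ + ℓ) := by
      intro y hy
      rcases le_total x₀ y with hcase | hcase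
      · have := key x₀ hx₀ y hy hcase
        constructor <;> linarith
      · have := key y hy x₀ hx₀ hcase
        constructor <;> linarith
    have hfinal : 2 * ℓ ≤ 4 * M / lam * (2 : ℝ) ^ (θ₂ * (j : ℝ) / 2) := by
      have s1 : δ / |ξ'| ≤ δ / (2 : ℝ) ^ ((θ₂ / 4) * (j : ℝ)) := by
        gcongr
      have s2 : δ / (2 : ℝ) ^ ((θ₂ / 4) * (j : ℝ))
          = (2 : ℝ) ^ (θ₂ * (j : ℝ) - (θ₂ / 4) * (j : ℝ)) := by
        rw [hδ, ← Real.rpow_sub two_pos]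
      have s3 : (2 : ℝ) ^ (θ₂ * (j : ℝ) - (θ₂ / 4) * (j : ℝ)) ≤ (2 : ℝ) ^ (θ₂ * (j : ℝ) / 2) := by
        apply Real.rpow_le_rpow_of_exponent_le one_le_two
        nlinarith
      have : δ / |ξ'| ≤ (2 : ℝ) ^ (θ₂ * (j : ℝ) / 2) := by
        rw [s2] at s1; linarith
      have h2l : 2 * ℓ = 4 * M / lam * (δ / |ξ'|) := by
        rw [hℓ]; field_simp; ring
      rw [h2l]
      apply mul_le_mul_of_nonneg_left this (by positivity)
    calc volume E ≤ volume (Icc (x₀ - ℓ) (x₀ + ℓ)) := measure_mono hsub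
      _ = ENNReal.ofReal (2 * ℓ) := by rw [Real.volume_Icc]; congr 1; ring
      _ ≤ ENNReal.ofReal (4 * M / lam * (2 : ℝ) ^ (θ₂ * (j : ℝ) / 2)) :=
          ENNReal.ofReal_le_ofReal hfinal
end

section
/- There exists a universal constant C > 0 with the following property. Let n ≥ 2 be a real number, set λ := 2^{1/n}, let j be a nonnegative integer, let h ∈ [1/10, 1], and let ξ ∈ ℝ satisfy |ξ| ≥ n · 2^{−j/4}. Then the set E_{h, ξ} := { η ∈ (1/λ, λ²) : hη − ξ ∈ (1/λ, λ²) and |η^{n−1} − h·(hη − ξ)^{n−1}| ≤ n^{−1} · 2^{−j/2} } has Lebesgue measure at most C · 2^{−j/4}. -/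
open MeasureTheory Filter Set
open scoped ENNReal Topology

lemma aux_rpow_lip {m x y r : ℝ} (hm : 0 < m) (hr : 0 < r) (hr1 : r ≤ 1)
    (hx : m ≤ x) (hy : m ≤ y) :
    |x ^ r - y ^ r| ≤ r * m ^ (r - 1) * |x - y| := by
  have key : ∀ z ∈ Set.Ici m, HasDerivWithinAt (fun t : ℝ => t ^ r)
      (r * z ^ (r - 1)) (Set.Ici m) z := by
    intro z hz
    exact (Real.hasDerivAt_rpow_const (Or.inl (by
      have : (0:ℝ) < z := lt_of_lt_of_le hm hz
      positivity))).hasDerivWithinAt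
  have bound : ∀ z ∈ Set.Ici m, ‖r * z ^ (r - 1)‖ ≤ r * m ^ (r - 1) := by
    intro z hz
    have hz0 : (0:ℝ) < z := lt_of_lt_of_le hm hz
    rw [Real.norm_eq_abs, abs_of_nonneg (by positivity)]
    exact mul_le_mul_of_nonneg_left
      (Real.rpow_le_rpow_of_nonpos hm hz (by linarith)) hr.le
  have := (convex_Ici m).norm_image_sub_le_of_norm_hasDerivWithin_le key bound hy hx
  simpa [Real.norm_eq_abs] using this

set_option maxHeartbeats 1000000 in
theorem stmt_15 :
    ∃ C : ℝ, 0 < C ∧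
      ∀ n : ℝ, 2 ≤ n → ∀ l : ℝ, l = (2 : ℝ) ^ (1 / n) →
        ∀ j : ℕ, ∀ h : ℝ, h ∈ Set.Icc (1 / 10 : ℝ) 1 →
          ∀ ξ : ℝ, n * (2 : ℝ) ^ (-(j : ℝ) / 4) ≤ |ξ| →
            volume {η : ℝ | η ∈ Set.Ioo (1 / l) (l ^ 2) ∧
                h * η - ξ ∈ Set.Ioo (1 / l) (l ^ 2) ∧
                |η ^ (n - 1) - h * (h * η - ξ) ^ (n - 1)| ≤ n⁻¹ * (2 : ℝ) ^ (-(j : ℝ) / 2)}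
              ≤ ENNReal.ofReal (C * (2 : ℝ) ^ (-(j : ℝ) / 4)) := by
  refine ⟨1000, by norm_num, ?_⟩
  intro n hn l hl j h hh ξ hξ
  set P : ℝ := (2 : ℝ) ^ (-(j : ℝ) / 4) with hPdef
  set Q : ℝ := (2 : ℝ) ^ (-(j : ℝ) / 2) with hQdef
  have hP0 : 0 < P := Real.rpow_pos_of_pos two_pos _
  have hQP : Q = P * P := by
    rw [hPdef, hQdef, ← Real.rpow_add two_pos]; ring_nf
  have hn0 : (0:ℝ) < n := by linarith
  set p : ℝ := n - 1 with hp
  have hp1 : (1:ℝ) ≤ p := by rw [hp]; linarith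
  have hp0 : (0:ℝ) < p := by linarith
  have hh1 : (1/10 : ℝ) ≤ h := hh.1
  have hh2 : h ≤ 1 := hh.2
  have hh0 : (0:ℝ) < h := by linarith
  have hl0 : (0:ℝ) < l := by rw [hl]; positivity
  have hl1 : 1 < l := by
    rw [hl]
    exact (Real.one_lt_rpow_iff_of_pos two_pos).mpr (Or.inl ⟨one_lt_two, by positivity⟩)
  have hil : (0:ℝ) < 1 / l := by positivity
  have hil1 : 1 / l ≤ 1 := by
    rw [div_le_one hl0]; linarith
  have hl2 : l ^ 2 ≤ 2 := by
    have e : l ^ 2 = (2:ℝ) ^ (1/n + 1/n) := by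
      rw [Real.rpow_add two_pos, hl]; ring
    rw [e]
    calc (2:ℝ) ^ (1/n + 1/n) ≤ (2:ℝ) ^ (1:ℝ) := by
          apply Real.rpow_le_rpow_of_exponent_le one_le_two
          rw [← add_div, div_le_one hn0]; linarith
      _ = 2 := Real.rpow_one 2
  have hlp : (1/2 : ℝ) ≤ (1/l) ^ p := by
    have e1 : (1/l : ℝ) = (2:ℝ) ^ (-(1/n)) := by
      rw [Real.rpow_neg two_pos.le, hl, one_div]
    have e2 : ((1/l : ℝ)) ^ p = (2:ℝ) ^ ((-(1/n)) * p) := by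
      rw [e1, ← Real.rpow_mul two_pos.le]
    rw [e2]
    have : (2:ℝ) ^ (-1 : ℝ) ≤ (2:ℝ) ^ ((-(1/n)) * p) := by
      apply Real.rpow_le_rpow_of_exponent_le one_le_two
      have hpn : p / n ≤ 1 := by rw [div_le_one hn0]; linarith
      have : (1/n) * p = p / n := by rw [one_div_mul_eq_div]
      nlinarith
    calc (1/2 : ℝ) = (2:ℝ) ^ (-1 : ℝ) := by rw [Real.rpow_neg_one]; norm_num
      _ ≤ _ := this
  set r : ℝ := p⁻¹ with hr
  have hr0 : 0 < r := by positivity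
  have hr1 : r ≤ 1 := by rw [hr]; exact inv_le_one_of_one_le₀ hp1
  set a : ℝ := 1 - h ^ (r + 1) with ha
  set b : ℝ := h ^ r * ξ with hb
  have ha0 : 0 ≤ a := by
    rw [ha]
    have : h ^ (r+1) ≤ 1 := Real.rpow_le_one hh0.le hh2 (by linarith)
    linarith
  have hbge : h * (n * P) ≤ |b| := by
    rw [hb, abs_mul, abs_of_nonneg (Real.rpow_nonneg hh0.le r)]
    have h1 : h ≤ h ^ r := by
      calc h = h ^ (1:ℝ) := (Real.rpow_one h).symm
        _ ≤ h ^ r := Real.rpow_le_rpow_of_exponent_ge hh0 hh2 hr1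
    have hξ0 : 0 ≤ |ξ| := abs_nonneg ξ
    calc h * (n * P) ≤ h * |ξ| := by
          apply mul_le_mul_of_nonneg_left hξ hh0.le
      _ ≤ h ^ r * |ξ| := mul_le_mul_of_nonneg_right h1 hξ0
  set B : ℝ := 2 * (P * P) / (p * h * n) with hB
  have hB0 : 0 ≤ B := by positivity
  -- Key pointwise claim
  have key : ∀ η : ℝ, η ∈ Set.Ioo (1/l) (l^2) → h * η - ξ ∈ Set.Ioo (1/l) (l^2) →
      |η ^ p - h * (h * η - ξ) ^ p| ≤ n⁻¹ * Q → |a * η + b| ≤ B := by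
    intro η hη1 hη2 hη3
    set u : ℝ := h * η - ξ with hu
    have hηpos : 0 < η := lt_trans hil hη1.1
    have hupos : 0 < u := lt_trans hil hη2.1
    have hsp : (1/2 : ℝ) ≤ η ^ p :=
      le_trans hlp (Real.rpow_le_rpow hil.le hη1.1.le hp0.le)
    have hup : (1/2 : ℝ) ≤ u ^ p :=
      le_trans hlp (Real.rpow_le_rpow hil.le hη2.1.le hp0.le)
    have hms : h/2 ≤ η ^ p := by linarith
    have hmt : h/2 ≤ h * u ^ p := by nlinarith
    have lip := aux_rpow_lip (m := h/2) (by positivity) hr0 hr1 hms hmt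
    have e1 : (η ^ p) ^ r = η := by
      rw [← Real.rpow_mul hηpos.le, mul_inv_cancel₀ hp0.ne', Real.rpow_one]
    have e2 : (h * u ^ p) ^ r = h ^ r * u := by
      rw [Real.mul_rpow hh0.le (Real.rpow_nonneg hupos.le p),
        ← Real.rpow_mul hupos.le, mul_inv_cancel₀ hp0.ne', Real.rpow_one]
    have e5 : η - h ^ r * u = a * η + b := by
      rw [ha, hb, hu, Real.rpow_add_one hh0.ne' r]; ring
    have Lb : r * (h/2) ^ (r - 1 : ℝ) ≤ 2 / (p * h) := by
      have h2h : (h/2 : ℝ) ≤ 1 := by linarith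
      have h3 : ((h:ℝ)/2) ^ (r - 1 : ℝ) ≤ (h/2 : ℝ) ^ (-1 : ℝ) :=
        Real.rpow_le_rpow_of_exponent_ge (by positivity) h2h (by linarith)
      have h4 : ((h:ℝ)/2) ^ (-1 : ℝ) = 2 / h := by
        rw [Real.rpow_neg_one, inv_div]
      have h5 : r * (2 / h) = 2 / (p * h) := by
        rw [hr]; field_simp
      calc r * (h/2) ^ (r - 1 : ℝ) ≤ r * (2 / h) := by
            apply mul_le_mul_of_nonneg_left _ hr0.le
            rw [← h4]; exact h3
        _ = 2 / (p * h) := h5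
    calc |a * η + b| = |(η ^ p) ^ r - (h * u ^ p) ^ r| := by rw [e1, e2, e5]
      _ ≤ r * (h/2) ^ (r - 1 : ℝ) * |η ^ p - h * u ^ p| := lip
      _ ≤ (2 / (p * h)) * (n⁻¹ * Q) := by
          apply mul_le_mul Lb hη3 (abs_nonneg _) (by positivity)
      _ = B := by rw [hB, hQP]; field_simp
  clear hξ
  clear_value P Q p r a b B
  by_cases hc : h * n * P / 4 < a
  · -- Case B : a large, sublevel of affine function
    have ha0' : 0 < a := lt_of_le_of_lt (by positivity) hc
    have hsub : {η : ℝ | η ∈ Set.Ioo (1/l) (l^2) ∧ h * η - ξ ∈ Set.Ioo (1/l) (l^2) ∧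
        |η ^ p - h * (h * η - ξ) ^ p| ≤ n⁻¹ * Q} ⊆
        Set.Icc ((-b - B)/a) ((-b + B)/a) := by
      rintro η ⟨h1, h2, h3⟩
      have hcl := abs_le.mp (key η h1 h2 h3)
      constructor
      · rw [div_le_iff₀ ha0']; linarith [hcl.1]
      · rw [le_div_iff₀ ha0']; linarith [hcl.2]
    refine le_trans (measure_mono hsub) ?_
    rw [Real.volume_Icc]
    apply ENNReal.ofReal_le_ofReal
    have e6 : (-b + B)/a - (-b - B)/a = 2 * B / a := by
      field_simp; ring
    rw [e6, div_le_iff₀ ha0']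
    -- 2*B ≤ 1000*P*a, using a > h*n*P/4, B = 2P²/(phn)
    have hhn : (1/5 : ℝ) ≤ h * n :=
      le_trans (by norm_num) (mul_le_mul hh1 hn (by norm_num) hh0.le)
    have hphn : (1/5 : ℝ) ≤ p * h * n := by
      have := mul_le_mul hp1 hhn (by norm_num) (by linarith : (0:ℝ) ≤ p)
      calc (1/5 : ℝ) = 1 * (1/5) := by norm_num
        _ ≤ p * (h * n) := this
        _ = p * h * n := by ring
    have h10 : (1/20 : ℝ) * P ≤ a := by linarith [hc.le, mul_le_mul_of_nonneg_right hhn hP0.le]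
    have h11 : B ≤ 10 * (P * P) := by
      rw [hB, div_le_iff₀ (by positivity : (0:ℝ) < p * h * n)]
      linarith [mul_le_mul_of_nonneg_left hphn (by positivity : (0:ℝ) ≤ 10 * (P * P))]
    have h12 : 1000 * P * ((1/20) * P) ≤ 1000 * P * a :=
      mul_le_mul_of_nonneg_left h10 (by positivity)
    linarith [h11, h12, mul_nonneg hP0.le hP0.le]
  · -- Case A : a small; trivial bound via 1/100 ≤ P
    push_neg at hc
    rcases Set.eq_empty_or_nonempty {η : ℝ | η ∈ Set.Ioo (1/l) (l^2) ∧
        h * η - ξ ∈ Set.Ioo (1/l) (l^2) ∧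
        |η ^ p - h * (h * η - ξ) ^ p| ≤ n⁻¹ * Q} with hE | hE
    · rw [hE, measure_empty]; exact zero_le
    · obtain ⟨η₀, h1, h2, h3⟩ := hE
      have hcl := key η₀ h1 h2 h3
      have hη₀2 : η₀ ≤ 2 := le_trans h1.2.le hl2
      have hη₀0 : 0 ≤ η₀ := (lt_trans hil h1.1).le
      have htri : |b| ≤ |a * η₀ + b| + a * η₀ := by
        have := abs_sub (a * η₀ + b) (a * η₀)
        rw [abs_of_nonneg (mul_nonneg ha0 hη₀0)] at this
        calc |b| = |(a * η₀ + b) - a * η₀| := by ring_nf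
          _ ≤ _ := this
      have haη : a * η₀ ≤ h * n * P / 2 := by nlinarith
      have hKB : h * n * P / 2 ≤ B := by
        have : h * (n * P) ≤ B + h * n * P / 2 := by
          calc h * (n * P) ≤ |b| := hbge
            _ ≤ |a * η₀ + b| + a * η₀ := htri
            _ ≤ B + h * n * P / 2 := add_le_add hcl haη
        linarith
      have hP100 : (1/100 : ℝ) ≤ P := by
        have e7 : B * (p * h * n) = 2 * (P * P) := by
          rw [hB]; field_simp
        have h8 : h * n * P / 2 * (p * h * n) ≤ 2 * (P * P) := by
          rw [← e7]
          apply mul_le_mul_of_nonneg_right hKB (by positivity)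
        have hhn : (1/5 : ℝ) ≤ h * n :=
          le_trans (by norm_num) (mul_le_mul hh1 hn (by norm_num) hh0.le)
        have h13 : (1/25 : ℝ) ≤ (h*n)*(h*n) := by nlinarith [sq_nonneg (h*n - 1/5)]
        have h14 : (1/25 : ℝ) ≤ (h*n)*(h*n)*p := by
          calc (1/25 : ℝ) = (1/25) * 1 := by norm_num
            _ ≤ ((h*n)*(h*n)) * p := mul_le_mul h13 hp1 zero_le_one (by positivity)
        have h15 : (1/25 : ℝ) * (P/2) ≤ ((h*n)*(h*n)*p) * (P/2) :=
          mul_le_mul_of_nonneg_right h14 (by positivity)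
        nlinarith [h8, h15, hP0, mul_pos hP0 hP0]
      have hsub2 : {η : ℝ | η ∈ Set.Ioo (1/l) (l^2) ∧ h * η - ξ ∈ Set.Ioo (1/l) (l^2) ∧
          |η ^ p - h * (h * η - ξ) ^ p| ≤ n⁻¹ * Q} ⊆ Set.Ioo (1/l) (l^2) :=
        fun η hη => hη.1
      calc volume _ ≤ volume (Set.Ioo (1/l) (l^2)) := measure_mono hsub2
        _ = ENNReal.ofReal (l^2 - 1/l) := Real.volume_Ioo
        _ ≤ ENNReal.ofReal (1000 * P) := by
            apply ENNReal.ofReal_le_ofReal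
            linarith
end

section
/- There exists a universal constant C > 0 such that for every ε ∈ (0, 1/2], every λ ≥ 0, and every R ≥ 1, one has | ∫_1^R e^{i(λ t^ε − t)} dt/t | ≤ C. -/
open Set intervalIntegral

lemma cont_aux (lam ε : ℝ) {s : Set ℝ} (hs : ∀ t ∈ s, t ≠ 0) :
    ContinuousOn (fun t : ℝ => Complex.exp (Complex.I * ((lam * t ^ ε - t : ℝ) : ℂ)) / (t : ℂ)) s := by
  apply ContinuousOn.div
  · exact Complex.continuous_exp.comp_continuousOn
      (continuousOn_const.mul (Complex.continuous_ofReal.comp_continuousOn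
        ((continuousOn_const.mul (continuousOn_id.rpow_const
          (fun x hx => Or.inl (hs x hx)))).sub continuousOn_id)))
  · exact Complex.continuous_ofReal.continuousOn
  · intro t ht
    exact Complex.ofReal_ne_zero.mpr (hs t ht)

lemma ibp (lam ε : ℝ) (hε : 0 < ε) (hε1 : ε < 1) (a b c : ℝ)
    (ha : 1 ≤ a) (hab : a ≤ b) (hc : 0 ≤ c)
    (hg : ∀ t ∈ Set.Icc a b, t / 2 ≤ |lam * ε * t ^ ε - t|)
    (hg' : ∀ t ∈ Set.Icc a b,
      |lam * ε ^ 2 * t ^ (ε - 1) - 1| ≤ c / t ^ 2 * (lam * ε * t ^ ε - t) ^ 2) :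
    ‖∫ t in a..b, Complex.exp (Complex.I * ((lam * t ^ ε - t : ℝ) : ℂ)) / (t : ℂ)‖ ≤ 4 + c := by
  have huIcc : Set.uIcc a b = Set.Icc a b := Set.uIcc_of_le hab
  set g : ℝ → ℝ := fun t => lam * ε * t ^ ε - t with hgdef
  set G : ℝ → ℝ := fun t => lam * ε ^ 2 * t ^ (ε - 1) - 1 with hGdef
  set φ : ℝ → ℝ := fun t => lam * t ^ ε - t with hφdef
  set ψ : ℝ → ℝ := fun t => lam * ε * t ^ (ε - 1) - 1 with hψdef
  set v : ℝ → ℂ := fun t => Complex.exp (Complex.I * (φ t : ℂ)) with hvdef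
  set u : ℝ → ℂ := fun t => -Complex.I * (((g t)⁻¹ : ℝ) : ℂ) with hudef
  set u' : ℝ → ℂ := fun t => -Complex.I * ((-(G t) / (g t) ^ 2 : ℝ) : ℂ) with hu'def
  set v' : ℝ → ℂ := fun t => Complex.exp (Complex.I * (φ t : ℂ)) * (Complex.I * (ψ t : ℂ)) with hv'def
  -- basic facts on the interval
  have ht0 : ∀ t ∈ Set.Icc a b, (0:ℝ) < t := fun t ht => lt_of_lt_of_le one_pos (le_trans ha ht.1)
  have htne : ∀ t ∈ Set.Icc a b, t ≠ 0 := fun t ht => ne_of_gt (ht0 t ht)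
  have hgpos : ∀ t ∈ Set.Icc a b, (0:ℝ) < |g t| := fun t ht =>
    lt_of_lt_of_le (by linarith [ht0 t ht]) (hg t ht)
  have hgne : ∀ t ∈ Set.Icc a b, g t ≠ 0 := fun t ht => abs_pos.mp (hgpos t ht)
  have hts : ∀ t ∈ Set.Icc a b, t * t ^ (ε - 1) = t ^ ε := by
    intro t ht
    have h := (Real.rpow_add (ht0 t ht) 1 (ε - 1)).symm
    rw [Real.rpow_one] at h
    rw [h]
    norm_num
  have hgt : ∀ t ∈ Set.Icc a b, g t = t * ψ t := by
    intro t ht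
    have := hts t ht
    simp only [hgdef, hψdef]
    linear_combination (-(lam * ε)) * this
  -- derivatives
  have hψd : ∀ t ∈ Set.Icc a b, HasDerivAt φ (ψ t) t := by
    intro t ht
    have h1 : HasDerivAt (fun s : ℝ => s ^ ε) (ε * t ^ (ε - 1)) t :=
      Real.hasDerivAt_rpow_const (Or.inl (htne t ht))
    have h2 := (h1.const_mul lam).sub (hasDerivAt_id t)
    refine h2.congr_deriv ?_
    simp only [hψdef]; ring
  have hGd : ∀ t ∈ Set.Icc a b, HasDerivAt g (G t) t := by
    intro t ht
    have h1 : HasDerivAt (fun s : ℝ => s ^ ε) (ε * t ^ (ε - 1)) t :=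
      Real.hasDerivAt_rpow_const (Or.inl (htne t ht))
    have h2 := (h1.const_mul (lam * ε)).sub (hasDerivAt_id t)
    refine h2.congr_deriv ?_
    simp only [hGdef]; ring
  have hvd : ∀ t ∈ Set.Icc a b, HasDerivAt v (v' t) t := by
    intro t ht
    exact (((hψd t ht).ofReal_comp).const_mul Complex.I).cexp
  have hud : ∀ t ∈ Set.Icc a b, HasDerivAt u (u' t) t := by
    intro t ht
    exact ((((hGd t ht).inv (hgne t ht)).ofReal_comp).const_mul (-Complex.I))
  -- continuity
  have htcont : ContinuousOn (fun t : ℝ => t ^ (ε - 1)) (Set.Icc a b) :=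
    continuousOn_id.rpow_const (fun t ht => Or.inl (htne t ht))
  have htecont : ContinuousOn (fun t : ℝ => t ^ ε) (Set.Icc a b) :=
    continuousOn_id.rpow_const (fun t ht => Or.inl (htne t ht))
  have hgcont : ContinuousOn g (Set.Icc a b) :=
    (continuousOn_const.mul htecont).sub continuousOn_id
  have hGcont : ContinuousOn G (Set.Icc a b) :=
    (continuousOn_const.mul htcont).sub continuousOn_const
  have hpsicont : ContinuousOn ψ (Set.Icc a b) :=
    (continuousOn_const.mul htcont).sub continuousOn_const
  have hphicont : ContinuousOn φ (Set.Icc a b) :=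
    (continuousOn_const.mul htecont).sub continuousOn_id
  have hvcont : ContinuousOn v (Set.Icc a b) :=
    Complex.continuous_exp.comp_continuousOn
      (continuousOn_const.mul (Complex.continuous_ofReal.comp_continuousOn hphicont))
  have hu'cont : ContinuousOn u' (Set.Icc a b) :=
    continuousOn_const.mul (Complex.continuous_ofReal.comp_continuousOn
      ((hGcont.neg).div (hgcont.pow 2) (fun t ht => pow_ne_zero 2 (hgne t ht))))
  have hv'cont : ContinuousOn v' (Set.Icc a b) :=
    hvcont.mul (continuousOn_const.mul (Complex.continuous_ofReal.comp_continuousOn hpsicont))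
  have hu'int : IntervalIntegrable u' MeasureTheory.volume a b :=
    (huIcc ▸ hu'cont).intervalIntegrable
  have hv'int : IntervalIntegrable v' MeasureTheory.volume a b :=
    (huIcc ▸ hv'cont).intervalIntegrable
  -- integration by parts
  have key := intervalIntegral.integral_mul_deriv_eq_deriv_mul
    (fun x hx => hud x (huIcc ▸ hx)) (fun x hx => hvd x (huIcc ▸ hx)) hu'int hv'int
  have heq : Set.EqOn
      (fun t : ℝ => Complex.exp (Complex.I * ((lam * t ^ ε - t : ℝ) : ℂ)) / (t : ℂ))
      (fun t => u t * v' t) (Set.uIcc a b) := by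
    intro t ht
    rw [huIcc] at ht
    have hpsine : ψ t ≠ 0 := by
      intro h
      exact hgne t ht (by rw [hgt t ht, h, mul_zero])
    have htc : (t : ℂ) ≠ 0 := Complex.ofReal_ne_zero.mpr (htne t ht)
    have hgc : (g t : ℂ) ≠ 0 := Complex.ofReal_ne_zero.mpr (hgne t ht)
    have hpsic : (ψ t : ℂ) ≠ 0 := Complex.ofReal_ne_zero.mpr hpsine
    have hgtc : (g t : ℂ) = (t : ℂ) * (ψ t : ℂ) := by
      rw [hgt t ht]; push_cast; ring
    simp only [hudef, hv'def, hφdef]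
    rw [Complex.ofReal_inv, hgtc]
    field_simp
    linear_combination Complex.I_mul_I
  rw [intervalIntegral.integral_congr heq, key]
  -- norms
  have hnormv : ∀ t : ℝ, ‖v t‖ = 1 := by
    intro t
    simp [hvdef, Complex.norm_exp]
  have hnormu : ∀ t ∈ Set.Icc a b, ‖u t‖ ≤ 2 := by
    intro t ht
    have h1 : (1:ℝ)/2 ≤ |g t| := le_trans (by linarith [le_trans ha ht.1]) (hg t ht)
    simp only [hudef]
    rw [norm_mul, norm_neg, Complex.norm_I, one_mul, Complex.norm_real, Real.norm_eq_abs,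
      abs_inv]
    rw [inv_le_comm₀ (lt_of_lt_of_le one_half_pos h1) two_pos]
    linarith
  have hnormu'v : ∀ t ∈ Set.Icc a b, ‖u' t * v t‖ ≤ c / t ^ 2 := by
    intro t ht
    rw [norm_mul, hnormv, mul_one]
    simp only [hu'def]
    have hgsq : (0:ℝ) < g t ^ 2 := lt_of_le_of_ne (sq_nonneg _) (Ne.symm (pow_ne_zero 2 (hgne t ht)))
    rw [norm_mul, norm_neg, Complex.norm_I, one_mul, Complex.norm_real, Real.norm_eq_abs,
      abs_div, abs_neg, abs_of_nonneg (sq_nonneg (g t)), div_le_div_iff₀ hgsq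
        (lt_of_le_of_ne (sq_nonneg t) (Ne.symm (pow_ne_zero 2 (htne t ht))))]
    have h6 := hg' t ht
    have ht2 : (0:ℝ) < t ^ 2 := lt_of_le_of_ne (sq_nonneg t) (Ne.symm (pow_ne_zero 2 (htne t ht)))
    calc |G t| * t ^ 2 ≤ (c / t ^ 2 * g t ^ 2) * t ^ 2 := by nlinarith
      _ = c * g t ^ 2 := by field_simp [htne t ht]
  have hbound : ‖∫ x in a..b, u' x * v x‖ ≤ c := by
    have hint1 : IntervalIntegrable (fun t => ‖u' t * v t‖) MeasureTheory.volume a b :=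
      (huIcc ▸ (hu'cont.mul hvcont).norm).intervalIntegrable
    have hcont2 : ContinuousOn (fun t : ℝ => c / t ^ 2) (Set.Icc a b) :=
      continuousOn_const.div (continuousOn_pow 2) (fun t ht => pow_ne_zero 2 (htne t ht))
    have hint2 : IntervalIntegrable (fun t : ℝ => c / t ^ 2) MeasureTheory.volume a b :=
      (huIcc ▸ hcont2).intervalIntegrable
    have h3 := intervalIntegral.norm_integral_le_integral_norm
      (f := fun t => u' t * v t) (μ := MeasureTheory.volume) hab
    have h4 := intervalIntegral.integral_mono_on hab hint1 hint2 (fun t ht => hnormu'v t ht)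
    have h5 : (∫ t in a..b, c / t ^ 2) = c / a - c / b := by
      have hF : ∀ t ∈ Set.uIcc a b, HasDerivAt (fun s : ℝ => -(c / s)) (c / t ^ 2) t := by
        intro t ht'
        rw [huIcc] at ht'
        have h7 := ((hasDerivAt_inv (htne t ht')).const_mul c).neg
        simp only [div_eq_mul_inv]
        refine h7.congr_deriv ?_
        ring
      rw [intervalIntegral.integral_eq_sub_of_hasDerivAt hF hint2]
      ring
    have hb0 : (0:ℝ) < b := lt_of_lt_of_le one_pos (le_trans ha hab)
    calc ‖∫ x in a..b, u' x * v x‖ ≤ ∫ t in a..b, ‖u' t * v t‖ := h3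
      _ ≤ ∫ t in a..b, c / t ^ 2 := h4
      _ = c / a - c / b := h5
      _ ≤ c := by
          have h8 := div_nonneg hc (le_of_lt hb0)
          have h9 := div_le_self hc ha
          linarith
  calc ‖u b * v b - u a * v a - ∫ x in a..b, u' x * v x‖
      ≤ ‖u b * v b - u a * v a‖ + ‖∫ x in a..b, u' x * v x‖ := norm_sub_le _ _
    _ ≤ (‖u b * v b‖ + ‖u a * v a‖) + c := add_le_add (norm_sub_le _ _) hbound
    _ ≤ (2 * 1 + 2 * 1) + c := by
        have hbm : b ∈ Set.Icc a b := Set.right_mem_Icc.mpr hab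
        have ham : a ∈ Set.Icc a b := Set.left_mem_Icc.mpr hab
        gcongr ?_ + ?_ + c
        · rw [norm_mul, hnormv]
          exact mul_le_mul_of_nonneg_right (hnormu b hbm) one_pos.le
        · rw [norm_mul, hnormv]
          exact mul_le_mul_of_nonneg_right (hnormu a ham) one_pos.le
    _ ≤ 4 + c := by norm_num

lemma arith_left (eps X : ℝ) (he0 : 0 ≤ eps) (he2 : eps ≤ 1/2) (hX : 2 ≤ X) :
    |eps * X - 1| ≤ 3 * (X - 1) ^ 2 := by
  rw [abs_le]
  constructor <;> nlinarith [sq_nonneg (X - 2)]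

lemma arith_right (eps X : ℝ) (he0 : 0 ≤ eps) (he2 : eps ≤ 1/2) (hX0 : 0 ≤ X)
    (hX : X ≤ 1/2) : |eps * X - 1| ≤ 8 * (X - 1) ^ 2 := by
  rw [abs_le]
  constructor <;> nlinarith

lemma max_16 (x y : ℝ) (h : y ≤ 16 * x) : max 1 y ≤ 16 * max 1 x := by
  apply max_le
  · have := le_max_left (1:ℝ) x; linarith
  · have := le_max_right (1:ℝ) x; linarith

lemma norm_f (lam ε t : ℝ) (ht : 0 < t) :
    ‖Complex.exp (Complex.I * ((lam * t ^ ε - t : ℝ) : ℂ)) / (t : ℂ)‖ = 1 / t := by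
  rw [norm_div]
  have h1 : ‖Complex.exp (Complex.I * ((lam * t ^ ε - t : ℝ) : ℂ))‖ = 1 := by
    rw [Complex.norm_exp]
    simp [Complex.mul_re]
  rw [h1, Complex.norm_real, Real.norm_eq_abs, abs_of_pos ht]

set_option maxHeartbeats 1000000

theorem stmt_17 :
    ∃ C : ℝ, 0 < C ∧ ∀ ε : ℝ, ε ∈ Set.Ioc (0 : ℝ) (1 / 2) → ∀ lam : ℝ, 0 ≤ lam →
      ∀ R : ℝ, 1 ≤ R →
        ‖∫ t in (1 : ℝ)..R,
            Complex.exp (Complex.I * ((lam * t ^ ε - t : ℝ) : ℂ)) / (t : ℂ)‖ ≤ C := by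
  refine ⟨100, by norm_num, ?_⟩
  intro ε hε lam hlam R hR
  obtain ⟨hε0, hε2⟩ := hε
  have hε1 : ε < 1 := lt_of_le_of_lt hε2 (by norm_num)
  have h1ε : (0:ℝ) < 1 - ε := by linarith
  set P : ℝ := lam * ε with hPdef
  have hP0 : 0 ≤ P := mul_nonneg hlam hε0.le
  set k : ℝ := 1 / (1 - ε) with hkdef
  have hk0 : 0 < k := by positivity
  have hk2 : k ≤ 2 := by
    rw [hkdef, div_le_iff₀ h1ε]; linarith
  have hk1 : k * (1 - ε) = 1 := by
    rw [hkdef]; field_simp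
  set T₁ : ℝ := (P / 2) ^ k with hT1def
  set T₂ : ℝ := (2 * P) ^ k with hT2def
  have hT1nn : 0 ≤ T₁ := Real.rpow_nonneg (by linarith) k
  set a : ℝ := min R (max 1 T₁) with hadef
  set b : ℝ := min R (max 1 T₂) with hbdef
  have ha1 : 1 ≤ a := le_min hR (le_max_left _ _)
  have ha0 : 0 < a := lt_of_lt_of_le one_pos ha1
  have hT12 : T₁ ≤ T₂ := Real.rpow_le_rpow (by linarith) (by linarith) hk0.le
  have hab : a ≤ b := min_le_min le_rfl (max_le_max le_rfl hT12)
  have hbR : b ≤ R := min_le_left _ _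
  have haR : a ≤ R := min_le_left _ _
  have hb1 : 1 ≤ b := le_trans ha1 hab
  -- integrability on subintervals
  have hint : ∀ x y : ℝ, 1 ≤ x → x ≤ y →
      IntervalIntegrable (fun t : ℝ =>
        Complex.exp (Complex.I * ((lam * t ^ ε - t : ℝ) : ℂ)) / (t : ℂ))
        MeasureTheory.volume x y := by
    intro x y hx hxy
    apply ContinuousOn.intervalIntegrable
    apply cont_aux
    intro t ht
    rw [Set.uIcc_of_le hxy] at ht
    exact ne_of_gt (lt_of_lt_of_le one_pos (le_trans hx ht.1))
  have hsplit : (∫ t in (1:ℝ)..R,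
        Complex.exp (Complex.I * ((lam * t ^ ε - t : ℝ) : ℂ)) / (t : ℂ))
      = (∫ t in (1:ℝ)..a, Complex.exp (Complex.I * ((lam * t ^ ε - t : ℝ) : ℂ)) / (t : ℂ))
      + (∫ t in a..b, Complex.exp (Complex.I * ((lam * t ^ ε - t : ℝ) : ℂ)) / (t : ℂ))
      + (∫ t in b..R, Complex.exp (Complex.I * ((lam * t ^ ε - t : ℝ) : ℂ)) / (t : ℂ)) := by
    rw [add_assoc,
      intervalIntegral.integral_add_adjacent_intervals (hint a b ha1 hab) (hint b R hb1 hbR),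
      intervalIntegral.integral_add_adjacent_intervals (hint 1 a le_rfl ha1)
        (hint a R ha1 haR)]
  -- key power manipulations
  have hpow : ∀ t : ℝ, 0 < t → t ^ (ε - 1) = (t ^ (1 - ε))⁻¹ := by
    intro t ht
    rw [show ε - 1 = -(1 - ε) by ring, Real.rpow_neg ht.le]
  have hXle : ∀ t : ℝ, 0 < t → T₂ ≤ t → P * t ^ (ε - 1) ≤ 1 / 2 := by
    intro t ht hTt
    rcases eq_or_lt_of_le hP0 with hP | hP
    · rw [← hP]; norm_num
    · have h2P : (0:ℝ) < 2 * P := by linarith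
      have hT2pow : T₂ ^ (1 - ε) = 2 * P := by
        rw [hT2def, ← Real.rpow_mul h2P.le, hk1, Real.rpow_one]
      have h1 : 2 * P ≤ t ^ (1 - ε) := by
        rw [← hT2pow]
        exact Real.rpow_le_rpow (Real.rpow_nonneg h2P.le k) hTt h1ε.le
      have h2 : (0:ℝ) < t ^ (1 - ε) := Real.rpow_pos_of_pos ht _
      rw [hpow t ht]
      have h3 : (t ^ (1 - ε))⁻¹ ≤ (2 * P)⁻¹ := by
        apply inv_anti₀ h2P h1
      calc P * (t ^ (1 - ε))⁻¹ ≤ P * (2 * P)⁻¹ := by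
            exact mul_le_mul_of_nonneg_left h3 hP0
        _ = 1 / 2 := by field_simp
  have hXge : ∀ t : ℝ, 0 < t → t ≤ T₁ → 0 < P → 2 ≤ P * t ^ (ε - 1) := by
    intro t ht hTt hP
    have hP2 : (0:ℝ) < P / 2 := by linarith
    have hT1pow : T₁ ^ (1 - ε) = P / 2 := by
      rw [hT1def, ← Real.rpow_mul hP2.le, hk1, Real.rpow_one]
    have h1 : t ^ (1 - ε) ≤ P / 2 := by
      rw [← hT1pow]
      exact Real.rpow_le_rpow ht.le hTt h1ε.le
    have h2 : (0:ℝ) < t ^ (1 - ε) := Real.rpow_pos_of_pos ht _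
    rw [hpow t ht]
    have h3 : (P / 2)⁻¹ ≤ (t ^ (1 - ε))⁻¹ := inv_anti₀ h2 h1
    calc (2:ℝ) = P * (P / 2)⁻¹ := by field_simp
      _ ≤ P * (t ^ (1 - ε))⁻¹ := mul_le_mul_of_nonneg_left h3 hP0
  have hts2 : ∀ t : ℝ, 0 < t → t * t ^ (ε - 1) = t ^ ε := by
    intro t ht
    have h := (Real.rpow_add ht 1 (ε - 1)).symm
    rw [Real.rpow_one] at h
    rw [h]; norm_num
  -- left piece
  have hleft : ‖∫ t in (1:ℝ)..a,
      Complex.exp (Complex.I * ((lam * t ^ ε - t : ℝ) : ℂ)) / (t : ℂ)‖ ≤ 7 := by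
    rcases eq_or_lt_of_le ha1 with hA | hA
    · rw [← hA, intervalIntegral.integral_same, norm_zero]; norm_num
    · have hmax : 1 < max 1 T₁ := lt_of_lt_of_le hA (min_le_right _ _)
      have hT1 : 1 < T₁ := by
        by_contra h
        push_neg at h
        rw [max_eq_left h] at hmax
        exact lt_irrefl 1 hmax
      have haT1 : a ≤ T₁ := le_trans (min_le_right _ _) (le_of_eq (max_eq_right hT1.le))
      have hP : 0 < P := by
        rcases eq_or_lt_of_le hP0 with h | h
        · exfalso
          have hz : T₁ = 0 := by
            rw [hT1def, ← h]
            norm_num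
            exact Real.zero_rpow (ne_of_gt hk0)
          linarith
        · exact h
      have h7 := ibp lam ε hε0 hε1 1 a 3 le_rfl hA.le (by norm_num) ?_ ?_
      · calc ‖_‖ ≤ 4 + 3 := h7
          _ ≤ 7 := by norm_num
      · intro t ht
        have ht1 : 1 ≤ t := ht.1
        have ht0 : 0 < t := lt_of_lt_of_le one_pos ht1
        have hX : 2 ≤ P * t ^ (ε - 1) := hXge t ht0 (le_trans ht.2 haT1) hP
        have h5 := hts2 t ht0
        have key : lam * ε * t ^ ε - t = t * (P * t ^ (ε - 1)) - t := by
          rw [← hPdef]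
          linear_combination (-P) * h5
        calc t / 2 ≤ lam * ε * t ^ ε - t := by
              rw [key]
              nlinarith [mul_nonneg ht0.le (by linarith : (0:ℝ) ≤ P * t ^ (ε - 1) - 2)]
          _ ≤ |lam * ε * t ^ ε - t| := le_abs_self _
      · intro t ht
        have ht1 : 1 ≤ t := ht.1
        have ht0 : 0 < t := lt_of_lt_of_le one_pos ht1
        have ht2 : (0:ℝ) < t ^ 2 := by positivity
        have hX : 2 ≤ P * t ^ (ε - 1) := hXge t ht0 (le_trans ht.2 haT1) hP
        have h5 := hts2 t ht0
        have key : lam * ε * t ^ ε - t = t * (P * t ^ (ε - 1)) - t := by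
          rw [← hPdef]
          linear_combination (-P) * h5
        have key2 : lam * ε ^ 2 * t ^ (ε - 1) = ε * (P * t ^ (ε - 1)) := by
          rw [hPdef]; ring
        rw [key, key2]
        have hrw : 3 / t ^ 2 * (t * (P * t ^ (ε - 1)) - t) ^ 2
            = 3 * (P * t ^ (ε - 1) - 1) ^ 2 := by
          field_simp
        rw [hrw]
        exact arith_left ε _ hε0.le hε2 hX
  -- right piece
  have hright : ‖∫ t in b..R,
      Complex.exp (Complex.I * ((lam * t ^ ε - t : ℝ) : ℂ)) / (t : ℂ)‖ ≤ 12 := by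
    rcases eq_or_lt_of_le hbR with hB | hB
    · rw [hB, intervalIntegral.integral_same, norm_zero]; norm_num
    · have hbT2 : T₂ ≤ b := by
        have hb' : b = max 1 T₂ := by
          rcases min_cases R (max 1 T₂) with ⟨h1, h2⟩ | ⟨h1, h2⟩
          · exfalso
            rw [hbdef] at hB
            rw [h1] at hB
            exact lt_irrefl R hB
          · rw [hbdef, h1]
        rw [hb']
        exact le_max_right _ _
      have h12 := ibp lam ε hε0 hε1 b R 8 hb1 hB.le (by norm_num) ?_ ?_
      · calc ‖_‖ ≤ 4 + 8 := h12
          _ ≤ 12 := by norm_num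
      · intro t ht
        have ht1 : 1 ≤ t := le_trans hb1 ht.1
        have ht0 : 0 < t := lt_of_lt_of_le one_pos ht1
        have hX : P * t ^ (ε - 1) ≤ 1 / 2 := hXle t ht0 (le_trans hbT2 ht.1)
        have hX0 : 0 ≤ P * t ^ (ε - 1) :=
          mul_nonneg hP0 (Real.rpow_nonneg ht0.le _)
        have h5 := hts2 t ht0
        have key : lam * ε * t ^ ε - t = t * (P * t ^ (ε - 1)) - t := by
          rw [← hPdef]
          linear_combination (-P) * h5
        calc t / 2 ≤ -(lam * ε * t ^ ε - t) := by
              rw [key]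
              nlinarith [mul_nonneg ht0.le (by linarith : (0:ℝ) ≤ 1 / 2 - P * t ^ (ε - 1))]
          _ ≤ |lam * ε * t ^ ε - t| := neg_le_abs _
      · intro t ht
        have ht1 : 1 ≤ t := le_trans hb1 ht.1
        have ht0 : 0 < t := lt_of_lt_of_le one_pos ht1
        have ht2 : (0:ℝ) < t ^ 2 := by positivity
        have hX : P * t ^ (ε - 1) ≤ 1 / 2 := hXle t ht0 (le_trans hbT2 ht.1)
        have hX0 : 0 ≤ P * t ^ (ε - 1) :=
          mul_nonneg hP0 (Real.rpow_nonneg ht0.le _)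
        have h5 := hts2 t ht0
        have key : lam * ε * t ^ ε - t = t * (P * t ^ (ε - 1)) - t := by
          rw [← hPdef]
          linear_combination (-P) * h5
        have key2 : lam * ε ^ 2 * t ^ (ε - 1) = ε * (P * t ^ (ε - 1)) := by
          rw [hPdef]; ring
        rw [key, key2]
        have hrw : 8 / t ^ 2 * (t * (P * t ^ (ε - 1)) - t) ^ 2
            = 8 * (P * t ^ (ε - 1) - 1) ^ 2 := by
          field_simp
        rw [hrw]
        exact arith_right ε _ hε0.le hε2 hX0 hX
  -- middle piece
  have hmid : ‖∫ t in a..b,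
      Complex.exp (Complex.I * ((lam * t ^ ε - t : ℝ) : ℂ)) / (t : ℂ)‖ ≤ 15 := by
    have hb16 : b ≤ 16 * a := by
      rcases min_cases R (max 1 T₁) with ⟨h1, h2⟩ | ⟨h1, h2⟩
      · have ha' : a = R := by rw [hadef, h1]
        rw [ha']
        linarith [hbR, lt_of_lt_of_le one_pos hR]
      · have ha' : a = max 1 T₁ := by rw [hadef, h1]
        have h4k : (4:ℝ) ^ k ≤ 16 := by
          have h6 := Real.rpow_le_rpow_of_exponent_le (by norm_num : (1:ℝ) ≤ 4) hk2
          have h7 : (4:ℝ) ^ (2:ℝ) = 16 := by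
            rw [show (2:ℝ) = ((2:ℕ):ℝ) by norm_num, Real.rpow_natCast]
            norm_num
          rwa [h7] at h6
        have h4k0 : (0:ℝ) ≤ (4:ℝ) ^ k := Real.rpow_nonneg (by norm_num) k
        have hT216 : T₂ ≤ 16 * T₁ := by
          have hsplit4 : T₂ = 4 ^ k * T₁ := by
            rw [hT2def, hT1def, show (2 * P) = 4 * (P / 2) by ring,
              Real.mul_rpow (by norm_num) (by linarith)]
          rw [hsplit4]
          calc (4:ℝ) ^ k * T₁ ≤ 16 * T₁ := mul_le_mul_of_nonneg_right h4k hT1nn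
            _ = 16 * T₁ := rfl
        have hm16 := max_16 T₁ T₂ hT216
        calc b ≤ max 1 T₂ := min_le_right _ _
          _ ≤ 16 * max 1 T₁ := hm16
          _ = 16 * a := by rw [ha']
    have hle := intervalIntegral.norm_integral_le_of_norm_le_const
      (C := 1 / a) (a := a) (b := b)
      (f := fun t : ℝ => Complex.exp (Complex.I * ((lam * t ^ ε - t : ℝ) : ℂ)) / (t : ℂ)) ?_
    · calc ‖_‖ ≤ 1 / a * |b - a| := hle
        _ ≤ 15 := by
            rw [abs_of_nonneg (by linarith)]
            have hstep : 1 / a * (b - a) ≤ 1 / a * (15 * a) :=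
              mul_le_mul_of_nonneg_left (by linarith) (by positivity)
            have heq15 : 1 / a * (15 * a) = 15 := by
              field_simp
            linarith
    · intro t htI
      have htm : t ∈ Set.Ioc a b := by rwa [Set.uIoc_of_le hab] at htI
      have ht0 : 0 < t := lt_trans ha0 htm.1
      rw [norm_f lam ε t ht0]
      exact one_div_le_one_div_of_le ha0 htm.1.le
  rw [hsplit]
  calc ‖_ + _ + _‖ ≤ ‖_ + _‖ + ‖_‖ := norm_add_le _ _
    _ ≤ ‖_‖ + ‖_‖ + ‖_‖ := add_le_add_left (norm_add_le _ _) _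
    _ ≤ 7 + 15 + 12 := add_le_add (add_le_add hleft hmid) hright
    _ ≤ 100 := by norm_num
end

section
/- There exists a universal constant C > 0 such that for every ε ∈ (0, 1/2], every λ ≥ 0, and every R ≥ 1, one has | ∫_1^R e^{i(λ t^ε + t)} dt/t | ≤ C. -/
open Set intervalIntegral

theorem stmt_18 :
    ∃ C : ℝ, 0 < C ∧ ∀ ε : ℝ, ε ∈ Set.Ioc (0 : ℝ) (1 / 2) → ∀ lam : ℝ, 0 ≤ lam →
      ∀ R : ℝ, 1 ≤ R →
        ‖∫ t in (1 : ℝ)..R,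
            Complex.exp (Complex.I * ((lam * t ^ ε + t : ℝ) : ℂ)) / (t : ℂ)‖ ≤ C := by
  refine ⟨3, by norm_num, ?_⟩
  intro ε hε lam hlam R hR
  obtain ⟨hε0, hε2⟩ := hε
  have huIcc : Set.uIcc (1 : ℝ) R = Set.Icc 1 R := Set.uIcc_of_le hR
  -- notation
  set φ : ℝ → ℝ := fun t => lam * t ^ ε + t with hφdef
  set φ' : ℝ → ℝ := fun t => lam * (ε * t ^ (ε - 1)) + 1 with hφ'def
  set h : ℝ → ℝ := fun t => lam * ε * t ^ ε + t with hhdef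
  set h' : ℝ → ℝ := fun t => lam * ε * (ε * t ^ (ε - 1)) + 1 with hh'def
  -- basic positivity facts on [1, R]
  have ht0 : ∀ t ∈ Set.Icc (1:ℝ) R, 0 < t := fun t ht => lt_of_lt_of_le one_pos ht.1
  have hh1 : ∀ t ∈ Set.Icc (1:ℝ) R, 1 ≤ h t := by
    intro t ht
    have h1 : (0:ℝ) < t := ht0 t ht
    have : 0 ≤ lam * ε * t ^ ε := by positivity
    simp only [hhdef]; linarith [ht.1]
  have hhpos : ∀ t ∈ Set.Icc (1:ℝ) R, 0 < h t := fun t ht => lt_of_lt_of_le one_pos (hh1 t ht)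
  have hh'pos : ∀ t ∈ Set.Icc (1:ℝ) R, 0 < h' t := by
    intro t ht
    have h1 : (0:ℝ) < t := ht0 t ht
    have : 0 ≤ lam * ε * (ε * t ^ (ε - 1)) := by positivity
    simp only [hh'def]; linarith
  -- key identity : t * φ' t = h t
  have hkey : ∀ t ∈ Set.Icc (1:ℝ) R, t * φ' t = h t := by
    intro t ht
    have htne : t ≠ 0 := (ht0 t ht).ne'
    have : t ^ ε = t ^ (ε - 1) * t := by
      rw [← Real.rpow_add_one htne (ε - 1)]; ring_nf
    simp only [hφ'def, hhdef, this]; ring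
  -- derivatives of φ and h
  have hφderiv : ∀ t ∈ Set.Icc (1:ℝ) R, HasDerivAt φ (φ' t) t := by
    intro t ht
    have : HasDerivAt (fun x : ℝ => x ^ ε) (ε * t ^ (ε - 1)) t :=
      Real.hasDerivAt_rpow_const (Or.inl (ht0 t ht).ne')
    exact ((this.const_mul lam).add (hasDerivAt_id t))
  have hhderiv : ∀ t ∈ Set.Icc (1:ℝ) R, HasDerivAt h (h' t) t := by
    intro t ht
    have : HasDerivAt (fun x : ℝ => x ^ ε) (ε * t ^ (ε - 1)) t :=
      Real.hasDerivAt_rpow_const (Or.inl (ht0 t ht).ne')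
    exact ((this.const_mul (lam * ε)).add (hasDerivAt_id t))
  -- complex functions
  set u : ℝ → ℂ := fun t => ((h t : ℂ))⁻¹ with hudef
  set u' : ℝ → ℂ := fun t => -((h' t : ℂ)) / ((h t : ℂ)) ^ 2 with hu'def
  set v : ℝ → ℂ := fun t => Complex.exp (Complex.I * ((φ t : ℝ) : ℂ)) with hvdef
  set v' : ℝ → ℂ := fun t => Complex.exp (Complex.I * ((φ t : ℝ) : ℂ)) * (Complex.I * (φ' t : ℂ)) with hv'def
  have hnormv : ∀ t : ℝ, ‖v t‖ = 1 := by
    intro t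
    simp [hvdef, Complex.norm_exp]
  have huderiv : ∀ t ∈ Set.Icc (1:ℝ) R, HasDerivAt u (u' t) t := by
    intro t ht
    have h1 : HasDerivAt (fun x : ℝ => ((h x : ℝ) : ℂ)) ((h' t : ℂ)) t :=
      (hhderiv t ht).ofReal_comp
    have h2 := ((hhderiv t ht).inv (hhpos t ht).ne').ofReal_comp
    simpa [hudef, hu'def, Complex.ofReal_div, Complex.ofReal_neg, Complex.ofReal_pow,
      Complex.ofReal_inv] using h2
  have hvderiv : ∀ t ∈ Set.Icc (1:ℝ) R, HasDerivAt v (v' t) t := by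
    intro t ht
    have h1 : HasDerivAt (fun x : ℝ => Complex.I * ((φ x : ℝ) : ℂ)) (Complex.I * (φ' t : ℂ)) t :=
      ((hφderiv t ht).ofReal_comp).const_mul Complex.I
    simpa [hvdef, hv'def] using h1.cexp
  -- continuity / integrability
  have hrpowCont : ContinuousOn (fun t : ℝ => t ^ (ε - 1)) (Set.Icc 1 R) :=
    ContinuousOn.rpow_const continuousOn_id (fun x hx => Or.inl (ht0 x hx).ne')
  have hφ'cont : ContinuousOn φ' (Set.Icc 1 R) := by
    simp only [hφ'def]
    exact ((hrpowCont.const_smul ε).const_smul lam).add continuousOn_const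
  have hh'cont : ContinuousOn h' (Set.Icc 1 R) := by
    simp only [hh'def]
    exact ((hrpowCont.const_smul ε).const_smul (lam * ε)).add continuousOn_const
  have hhcont : ContinuousOn h (Set.Icc 1 R) := by
    simp only [hhdef]
    exact ((ContinuousOn.rpow_const continuousOn_id
      (fun x hx => Or.inl (ht0 x hx).ne')).const_smul (lam * ε)).add continuousOn_id
  have hφcont : ContinuousOn φ (Set.Icc 1 R) := by
    simp only [hφdef]
    exact ((ContinuousOn.rpow_const continuousOn_id
      (fun x hx => Or.inl (ht0 x hx).ne')).const_smul lam).add continuousOn_id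
  have hvcont : ContinuousOn v (Set.Icc 1 R) := by
    simp only [hvdef]
    exact Complex.continuous_exp.comp_continuousOn
      ((Complex.continuous_ofReal.comp_continuousOn hφcont).const_smul Complex.I)
  have hu'cont : ContinuousOn u' (Set.Icc 1 R) := by
    simp only [hu'def]
    apply ContinuousOn.div
    · exact (Complex.continuous_ofReal.comp_continuousOn hh'cont).neg
    · exact (Complex.continuous_ofReal.comp_continuousOn hhcont).pow 2
    · intro x hx
      have : ((h x : ℝ) : ℂ) ≠ 0 := by exact_mod_cast (hhpos x hx).ne'
      simpa using pow_ne_zero 2 this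
  have hv'cont : ContinuousOn v' (Set.Icc 1 R) := by
    simp only [hv'def]
    exact hvcont.mul ((Complex.continuous_ofReal.comp_continuousOn hφ'cont).const_smul Complex.I)
  have hu'int : IntervalIntegrable u' MeasureTheory.volume 1 R :=
    (hu'cont.mono (by rw [huIcc])).intervalIntegrable
  have hv'int : IntervalIntegrable v' MeasureTheory.volume 1 R :=
    (hv'cont.mono (by rw [huIcc])).intervalIntegrable
  -- integration by parts
  have hIBP : ∫ t in (1:ℝ)..R, u t * v' t
      = u R * v R - u 1 * v 1 - ∫ t in (1:ℝ)..R, u' t * v t := by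
    apply intervalIntegral.integral_mul_deriv_eq_deriv_mul
    · intro x hx; exact huderiv x (huIcc ▸ hx)
    · intro x hx; exact hvderiv x (huIcc ▸ hx)
    · exact hu'int
    · exact hv'int
  -- the original integrand equals -I * (u t * v' t) on [1,R]
  have hinteq : ∫ t in (1:ℝ)..R,
      Complex.exp (Complex.I * ((lam * t ^ ε + t : ℝ) : ℂ)) / (t : ℂ)
      = -Complex.I * ∫ t in (1:ℝ)..R, u t * v' t := by
    rw [← intervalIntegral.integral_const_mul]
    apply intervalIntegral.integral_congr
    intro t ht
    rw [huIcc] at ht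
    have htne : (t : ℂ) ≠ 0 := by exact_mod_cast (ht0 t ht).ne'
    have hhne : ((h t : ℝ) : ℂ) ≠ 0 := by exact_mod_cast (hhpos t ht).ne'
    have hk : (t : ℂ) * ((φ' t : ℝ) : ℂ) = ((h t : ℝ) : ℂ) := by
      exact_mod_cast congrArg (fun x : ℝ => (x : ℂ)) (hkey t ht)
    simp only [hudef, hv'def, hφdef]
    field_simp
    rw [← hk]
    ring_nf
    rw [Complex.I_sq]
    ring
  -- FTC for ∫ h'/h²
  have hFTC : ∫ t in (1:ℝ)..R, h' t / (h t) ^ 2 = (h 1)⁻¹ - (h R)⁻¹ := by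
    have : ∀ x ∈ Set.uIcc (1:ℝ) R, HasDerivAt (fun t => -(h t)⁻¹) (h' x / (h x) ^ 2) x := by
      intro x hx
      rw [huIcc] at hx
      have := ((hhderiv x hx).inv (hhpos x hx).ne').neg
      simp only [neg_div, neg_neg] at this
      exact this
    have hint : IntervalIntegrable (fun t => h' t / (h t) ^ 2) MeasureTheory.volume 1 R := by
      apply ContinuousOn.intervalIntegrable
      rw [huIcc]
      exact hh'cont.div (hhcont.pow 2) (fun x hx => (pow_pos (hhpos x hx) 2).ne')
    have heq := intervalIntegral.integral_eq_sub_of_hasDerivAt this hint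
    rw [heq]; ring
  -- bound the u' v integral
  have hbound2 : ‖∫ t in (1:ℝ)..R, u' t * v t‖ ≤ 1 := by
    have h1 : ‖∫ t in (1:ℝ)..R, u' t * v t‖ ≤ ∫ t in (1:ℝ)..R, ‖u' t * v t‖ :=
      intervalIntegral.norm_integral_le_integral_norm hR
    have h2 : ∫ t in (1:ℝ)..R, ‖u' t * v t‖ = ∫ t in (1:ℝ)..R, h' t / (h t) ^ 2 := by
      apply intervalIntegral.integral_congr
      intro t ht
      rw [huIcc] at ht
      have hp := hhpos t ht
      have hp' := hh'pos t ht
      simp only [hu'def, norm_mul, hnormv, mul_one, norm_div, norm_neg, norm_pow,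
        Complex.norm_real, Real.norm_eq_abs]
      rw [abs_of_pos hp', abs_of_pos hp]
    rw [h2, hFTC] at h1
    have hA : (h 1)⁻¹ ≤ 1 := by
      have := hh1 1 ⟨le_refl _, hR⟩
      exact inv_le_one_of_one_le₀ this
    have hB : 0 ≤ (h R)⁻¹ := by
      have := hhpos R ⟨hR, le_refl _⟩
      positivity
    linarith
  -- bound the boundary terms
  have hbd : ∀ t ∈ Set.Icc (1:ℝ) R, ‖u t * v t‖ ≤ 1 := by
    intro t ht
    have hp := hhpos t ht
    have h1 := hh1 t ht
    rw [norm_mul, hnormv, mul_one, hudef]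
    simp only [norm_inv, Complex.norm_real, Real.norm_eq_abs, abs_of_pos hp]
    exact inv_le_one_of_one_le₀ h1
  -- put it together
  rw [hinteq, norm_mul]
  have : ‖-Complex.I‖ = 1 := by simp
  rw [this, one_mul, hIBP]
  calc ‖u R * v R - u 1 * v 1 - ∫ t in (1:ℝ)..R, u' t * v t‖
      ≤ ‖u R * v R - u 1 * v 1‖ + ‖∫ t in (1:ℝ)..R, u' t * v t‖ := norm_sub_le _ _
    _ ≤ (‖u R * v R‖ + ‖u 1 * v 1‖) + ‖∫ t in (1:ℝ)..R, u' t * v t‖ := by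
        gcongr; exact norm_sub_le _ _
    _ ≤ (1 + 1) + 1 := by
        have hA := hbd R ⟨hR, le_refl _⟩
        have hB := hbd 1 ⟨le_refl _, hR⟩
        linarith [hbound2]
    _ = 3 := by norm_num
end

section
/- There exists a universal constant C > 0 such that for every ε ∈ (1, 2], every λ ≤ 0, and every R > 0, one has | ∫_0^R sin(λ t^ε − t) dt/t | ≤ C. -/
open Set intervalIntegral MeasureTheory

namespace Stmt19Aux

noncomputable def Df (ε lam t : ℝ) : ℝ := t - lam * ε * t ^ ε
noncomputable def Dd (ε lam t : ℝ) : ℝ := 1 - lam * ε * (ε * t ^ (ε - 1))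
noncomputable def Gf (ε lam t : ℝ) : ℝ := Real.cos (lam * t ^ ε - t) - 1
noncomputable def Gd (ε lam t : ℝ) : ℝ :=
  -Real.sin (lam * t ^ ε - t) * (lam * (ε * t ^ (ε - 1)) - 1)

lemma one_sub_cos_le (x : ℝ) : 1 - Real.cos x ≤ x ^ 2 / 2 := by
  have h : Real.cos (2 * (x / 2)) = Real.cos (x / 2) ^ 2 - Real.sin (x / 2) ^ 2 :=
    Real.cos_two_mul' (x / 2)
  have h2 : |Real.sin (x / 2)| ≤ |x / 2| := Real.abs_sin_le_abs
  have h3 := Real.sin_sq_add_cos_sq (x / 2)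
  have h4 : Real.sin (x / 2) ^ 2 ≤ (x / 2) ^ 2 := by
    nlinarith [sq_abs (Real.sin (x / 2)), sq_abs (x / 2), abs_nonneg (Real.sin (x / 2)),
      abs_nonneg (x / 2)]
  have hx : (2 : ℝ) * (x / 2) = x := by ring
  rw [hx] at h
  nlinarith

section
variable {ε lam t : ℝ} (hε1 : 1 < ε) (hlam : lam ≤ 0) (ht : 0 < t)

include hε1 hlam ht in
lemma D_pos : 0 < Df ε lam t := by
  have h1 : 0 < t ^ ε := Real.rpow_pos_of_pos ht ε
  have h2 : 0 ≤ -lam * ε * t ^ ε :=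
    mul_nonneg (mul_nonneg (neg_nonneg.2 hlam) (by linarith)) h1.le
  unfold Df; nlinarith

include hε1 hlam ht in
lemma Dd_ge_one : 1 ≤ Dd ε lam t := by
  have h1 : 0 < t ^ (ε - 1) := Real.rpow_pos_of_pos ht (ε - 1)
  have h2 : 0 ≤ -lam * ε * (ε * t ^ (ε - 1)) :=
    mul_nonneg (mul_nonneg (neg_nonneg.2 hlam) (by linarith)) (by positivity)
  unfold Dd; nlinarith

include hε1 hlam ht in
lemma abs_phi_le : |lam * t ^ ε - t| ≤ Df ε lam t := by
  have h1 : 0 < t ^ ε := Real.rpow_pos_of_pos ht ε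
  have h2 : lam * t ^ ε - t ≤ 0 := by nlinarith
  rw [abs_of_nonpos h2]
  unfold Df
  nlinarith [mul_nonneg (mul_nonneg (neg_nonneg.2 hlam) (by linarith : (0:ℝ) ≤ ε - 1)) h1.le]

lemma abs_G_le_two : |Gf ε lam t| ≤ 2 := by
  unfold Gf
  have := Real.cos_le_one (lam * t ^ ε - t)
  have := Real.neg_one_le_cos (lam * t ^ ε - t)
  rw [abs_le]; constructor <;> linarith

include hε1 hlam ht in
lemma abs_G_le_sq : |Gf ε lam t| ≤ (Df ε lam t) ^ 2 / 2 := by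
  have h1 := one_sub_cos_le (lam * t ^ ε - t)
  have h2 := abs_phi_le hε1 hlam ht
  have h3 := Real.cos_le_one (lam * t ^ ε - t)
  have h4 := sq_abs (lam * t ^ ε - t)
  have h5 := abs_nonneg (lam * t ^ ε - t)
  have h6 := D_pos hε1 hlam ht
  unfold Gf
  rw [abs_of_nonpos (by linarith)]
  nlinarith

include hε1 hlam ht in
lemma boundary_bound : |(Df ε lam t)⁻¹ * Gf ε lam t| ≤ 1 := by
  have h2 := abs_G_le_two (ε := ε) (lam := lam) (t := t)
  have h3 := abs_G_le_sq hε1 hlam ht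
  have h6 := D_pos hε1 hlam ht
  have hGD : |Gf ε lam t| ≤ Df ε lam t := by
    rcases le_total (Df ε lam t) 2 with hc | hc
    · nlinarith
    · linarith
  rw [abs_mul, abs_inv, abs_of_pos h6]
  rw [inv_mul_le_iff₀ h6]
  linarith

include hε1 hlam ht in
lemma pointwise_bound :
    |(-(Dd ε lam t) / (Df ε lam t) ^ 2) * Gf ε lam t| ≤
      8 * Dd ε lam t / (1 + Df ε lam t) ^ 2 := by
  have h2 := abs_G_le_two (ε := ε) (lam := lam) (t := t)
  have h3 := abs_G_le_sq hε1 hlam ht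
  have h6 := D_pos hε1 hlam ht
  have h7 := Dd_ge_one hε1 hlam ht
  have key : |Gf ε lam t| * (1 + Df ε lam t) ^ 2 ≤ 8 * (Df ε lam t) ^ 2 := by
    rcases le_total (Df ε lam t) 3 with hc | hc
    · nlinarith [abs_nonneg (Gf ε lam t)]
    · nlinarith [abs_nonneg (Gf ε lam t)]
  rw [abs_mul, abs_div, abs_neg, abs_of_nonneg (by linarith : (0:ℝ) ≤ Dd ε lam t),
    abs_of_nonneg (sq_nonneg _)]
  rw [div_mul_eq_mul_div, div_le_div_iff₀ (by positivity) (by positivity)]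
  nlinarith [abs_nonneg (Gf ε lam t), sq_nonneg (Df ε lam t)]

end

lemma key (ε lam a R : ℝ) (hε1 : 1 < ε) (hlam : lam ≤ 0) (ha : 0 < a) (haR : a ≤ R) :
    |∫ t in a..R, Real.sin (lam * t ^ ε - t) / t| ≤ 10 := by
  have hDpos : ∀ t : ℝ, 0 < t → 0 < Df ε lam t := fun t ht => D_pos hε1 hlam ht
  have hbdry : ∀ t : ℝ, 0 < t → |(Df ε lam t)⁻¹ * Gf ε lam t| ≤ 1 :=
    fun t ht => boundary_bound hε1 hlam ht
  have hptw : ∀ t : ℝ, 0 < t → |(-(Dd ε lam t) / (Df ε lam t) ^ 2) * Gf ε lam t| ≤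
      8 * Dd ε lam t / (1 + Df ε lam t) ^ 2 := fun t ht => pointwise_bound hε1 hlam ht
  have hIcc : Set.uIcc a R = Set.Icc a R := Set.uIcc_of_le haR
  have hmem : ∀ x ∈ Set.uIcc a R, 0 < x := by
    intro x hx; rw [hIcc] at hx; exact lt_of_lt_of_le ha hx.1
  -- continuity building blocks
  have hcrp : ∀ p : ℝ, ContinuousOn (fun x : ℝ => x ^ p) (Set.uIcc a R) := fun p x hx =>
    (Real.continuousAt_rpow_const x p (Or.inl (hmem x hx).ne')).continuousWithinAt
  have hcD : ContinuousOn (Df ε lam) (Set.uIcc a R) :=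
    continuousOn_id.sub (continuousOn_const.mul (hcrp ε))
  have hcDd : ContinuousOn (Dd ε lam) (Set.uIcc a R) :=
    continuousOn_const.sub (continuousOn_const.mul (continuousOn_const.mul (hcrp (ε - 1))))
  have hcφ : ContinuousOn (fun t : ℝ => lam * t ^ ε - t) (Set.uIcc a R) :=
    (continuousOn_const.mul (hcrp ε)).sub continuousOn_id
  have hcG : ContinuousOn (Gf ε lam) (Set.uIcc a R) :=
    (Real.continuous_cos.comp_continuousOn hcφ).sub continuousOn_const
  have hcGd : ContinuousOn (Gd ε lam) (Set.uIcc a R) :=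
    ((Real.continuous_sin.comp_continuousOn hcφ).neg).mul
      ((continuousOn_const.mul (continuousOn_const.mul (hcrp (ε - 1)))).sub continuousOn_const)
  have hcu' : ContinuousOn (fun x => -(Dd ε lam x) / (Df ε lam x) ^ 2) (Set.uIcc a R) :=
    hcDd.neg.div (hcD.pow 2) fun x hx => pow_ne_zero _ (hDpos x (hmem x hx)).ne'
  -- derivatives
  have hD : ∀ x ∈ Set.uIcc a R, HasDerivAt (Df ε lam) (Dd ε lam x) x := by
    intro x hx
    exact (hasDerivAt_id x).sub
      ((Real.hasDerivAt_rpow_const (Or.inl (hmem x hx).ne')).const_mul (lam * ε))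
  have hu : ∀ x ∈ Set.uIcc a R,
      HasDerivAt (fun t => (Df ε lam t)⁻¹) (-(Dd ε lam x) / (Df ε lam x) ^ 2) x :=
    fun x hx => (hD x hx).inv (hDpos x (hmem x hx)).ne'
  have hv : ∀ x ∈ Set.uIcc a R, HasDerivAt (Gf ε lam) (Gd ε lam x) x := by
    intro x hx
    exact (((Real.hasDerivAt_rpow_const (Or.inl (hmem x hx).ne')).const_mul lam).sub
      (hasDerivAt_id x)).cos.sub_const 1
  -- integrability
  have hiu' : IntervalIntegrable (fun x => -(Dd ε lam x) / (Df ε lam x) ^ 2) volume a R :=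
    hcu'.intervalIntegrable
  have hiv' : IntervalIntegrable (Gd ε lam) volume a R := hcGd.intervalIntegrable
  -- integration by parts
  have ibp := intervalIntegral.integral_mul_deriv_eq_deriv_mul hu hv hiu' hiv'
  -- rewriting the integrand
  have hcongr : (∫ t in a..R, Real.sin (lam * t ^ ε - t) / t) =
      ∫ t in a..R, (Df ε lam t)⁻¹ * Gd ε lam t := by
    apply intervalIntegral.integral_congr
    intro x hx
    have hx0 : 0 < x := hmem x hx
    have hxε : x ^ ε = x ^ (ε - 1) * x := by
      rw [show ε = ε - 1 + 1 by ring, Real.rpow_add_one hx0.ne']; ring_nf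
    have hX : 0 < 1 - lam * (ε * x ^ (ε - 1)) := by
      have h1 : 0 ≤ -lam * (ε * x ^ (ε - 1)) :=
        mul_nonneg (neg_nonneg.2 hlam)
          (mul_nonneg (by linarith) (Real.rpow_pos_of_pos hx0 _).le)
      linarith
    have hsplit : Df ε lam x = x * (1 - lam * (ε * x ^ (ε - 1))) := by
      unfold Df; rw [hxε]; ring
    show Real.sin (lam * x ^ ε - x) / x = (Df ε lam x)⁻¹ * Gd ε lam x
    rw [hsplit]; unfold Gd
    have hX' := hX.ne'
    generalize lam * (ε * x ^ (ε - 1)) = y at hX' ⊢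
    field_simp
    ring
  rw [hcongr, ibp]
  -- bound |∫ h' G| via FTC comparison
  have hmono : |∫ x in a..R, (-(Dd ε lam x) / (Df ε lam x) ^ 2) * Gf ε lam x| ≤ 8 := by
    have h1 := intervalIntegral.abs_integral_le_integral_abs
      (f := fun x => (-(Dd ε lam x) / (Df ε lam x) ^ 2) * Gf ε lam x) (μ := volume) haR
    have hiprod : IntervalIntegrable
        (fun x => |(-(Dd ε lam x) / (Df ε lam x) ^ 2) * Gf ε lam x|) volume a R :=
      (hcu'.mul hcG).abs.intervalIntegrable
    have hibnd : IntervalIntegrable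
        (fun x => 8 * Dd ε lam x / (1 + Df ε lam x) ^ 2) volume a R := by
      apply ContinuousOn.intervalIntegrable
      exact (continuousOn_const.mul hcDd).div ((continuousOn_const.add hcD).pow 2)
        fun x hx => pow_ne_zero _ (by nlinarith [hDpos x (hmem x hx)])
    have h2 : (∫ x in a..R, |(-(Dd ε lam x) / (Df ε lam x) ^ 2) * Gf ε lam x|) ≤
        ∫ x in a..R, 8 * Dd ε lam x / (1 + Df ε lam x) ^ 2 := by
      apply intervalIntegral.integral_mono_on haR hiprod hibnd
      intro x hx
      exact hptw x (hmem x (by rwa [hIcc]))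
    have hftc : (∫ x in a..R, 8 * Dd ε lam x / (1 + Df ε lam x) ^ 2) =
        -(8 * (1 + Df ε lam R)⁻¹) - -(8 * (1 + Df ε lam a)⁻¹) := by
      apply intervalIntegral.integral_eq_sub_of_hasDerivAt
      · intro x hx
        have h1 : (0 : ℝ) < 1 + Df ε lam x := by nlinarith [hDpos x (hmem x hx)]
        have := ((((hasDerivAt_const x (1 : ℝ)).add (hD x hx)).inv h1.ne').const_mul
          (8 : ℝ)).neg
        convert this using 1
        show 8 * Dd ε lam x / (1 + Df ε lam x) ^ 2 = -(8 * (-(0 + Dd ε lam x) / (1 + Df ε lam x) ^ 2))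
        ring
        rfl
      · exact hibnd
    have hDa := hDpos a ha
    have hDR := hDpos R (lt_of_lt_of_le ha haR)
    have h3 : -(8 * (1 + Df ε lam R)⁻¹) - -(8 * (1 + Df ε lam a)⁻¹) ≤ 8 := by
      have i1 : 0 < (1 + Df ε lam R)⁻¹ := by positivity
      have i2 : (1 + Df ε lam a)⁻¹ ≤ 1 := by
        rw [inv_le_one_iff₀]; right; linarith
      linarith
    calc |∫ x in a..R, (-(Dd ε lam x) / (Df ε lam x) ^ 2) * Gf ε lam x| ≤ _ := h1
      _ ≤ _ := h2
      _ ≤ 8 := by rw [hftc] at *; exact h3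
  have hbR := hbdry R (lt_of_lt_of_le ha haR)
  have hba := hbdry a ha
  calc |(Df ε lam R)⁻¹ * Gf ε lam R - (Df ε lam a)⁻¹ * Gf ε lam a -
        ∫ x in a..R, (-(Dd ε lam x) / (Df ε lam x) ^ 2) * Gf ε lam x|
      ≤ |(Df ε lam R)⁻¹ * Gf ε lam R| + |(Df ε lam a)⁻¹ * Gf ε lam a| +
        |∫ x in a..R, (-(Dd ε lam x) / (Df ε lam x) ^ 2) * Gf ε lam x| := by
        exact (abs_sub _ _).trans (by gcongr; exact abs_sub _ _)
    _ ≤ 1 + 1 + 8 := by gcongr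
    _ = 10 := by norm_num

lemma norm_small (ε lam a : ℝ) (hlam : lam ≤ 0) (ha : 0 < a)
    (hbd : ∀ t : ℝ, t ∈ Set.Ioc 0 a → -lam * t ^ (ε - 1) ≤ 1)
    (t : ℝ) (ht : t ∈ Set.Ioc 0 a) : ‖Real.sin (lam * t ^ ε - t) / t‖ ≤ 2 := by
  have ht0 : 0 < t := ht.1
  have h1 : |Real.sin (lam * t ^ ε - t)| ≤ |lam * t ^ ε - t| := Real.abs_sin_le_abs
  have hε : 0 < t ^ ε := Real.rpow_pos_of_pos ht0 ε
  have h2 : |lam * t ^ ε - t| = t - lam * t ^ ε := by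
    rw [abs_of_nonpos (by nlinarith)]; ring
  have h3 : t ^ ε = t ^ (ε - 1) * t := by
    rw [show ε = ε - 1 + 1 by ring, Real.rpow_add_one ht0.ne']; ring_nf
  have h4 := hbd t ht
  have h5 : 0 < t ^ (ε - 1) := Real.rpow_pos_of_pos ht0 (ε - 1)
  rw [Real.norm_eq_abs, abs_div, abs_of_pos ht0, div_le_iff₀ ht0]
  calc |Real.sin (lam * t ^ ε - t)| ≤ t - lam * t ^ ε := h1.trans_eq h2
    _ = t * (1 - lam * t ^ (ε - 1)) := by rw [h3]; ring
    _ ≤ t * 2 := by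
        apply mul_le_mul_of_nonneg_left _ ht0.le
        nlinarith
    _ = 2 * t := by ring

lemma small (ε lam a : ℝ) (hlam : lam ≤ 0) (ha : 0 < a)
    (hbd : ∀ t : ℝ, t ∈ Set.Ioc 0 a → -lam * t ^ (ε - 1) ≤ 1) (ha1 : a ≤ 1) :
    |∫ t in (0 : ℝ)..a, Real.sin (lam * t ^ ε - t) / t| ≤ 2 := by
  have key : ∀ t ∈ Set.uIoc (0 : ℝ) a, ‖Real.sin (lam * t ^ ε - t) / t‖ ≤ 2 := by
    intro t ht
    rw [Set.uIoc_of_le ha.le] at ht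
    exact norm_small ε lam a hlam ha hbd t ht
  have := intervalIntegral.norm_integral_le_of_norm_le_const key
  rw [Real.norm_eq_abs] at this
  calc |∫ t in (0:ℝ)..a, Real.sin (lam * t ^ ε - t) / t| ≤ 2 * |a - 0| := this
    _ ≤ 2 := by rw [abs_of_pos (by simpa using ha)]; simpa using (by linarith : a ≤ 1)

lemma integrable_small (ε lam a : ℝ) (hlam : lam ≤ 0) (ha : 0 < a)
    (hbd : ∀ t : ℝ, t ∈ Set.Ioc 0 a → -lam * t ^ (ε - 1) ≤ 1) :
    IntervalIntegrable (fun t => Real.sin (lam * t ^ ε - t) / t) volume 0 a := by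
  rw [intervalIntegrable_iff]
  have hmeas : Measurable (fun t : ℝ => Real.sin (lam * t ^ ε - t) / t) := by
    apply Measurable.div _ measurable_id
    exact Real.measurable_sin.comp
      ((measurable_const.mul (measurable_id.pow_const ε)).sub measurable_id)
  have hconst : MeasureTheory.IntegrableOn (fun _ : ℝ => (2 : ℝ)) (Set.uIoc 0 a) volume := by
    apply MeasureTheory.integrableOn_const
    rw [Set.uIoc_of_le ha.le]
    exact measure_Ioc_lt_top.ne
    exact enorm_ne_top
  apply MeasureTheory.Integrable.mono' (g := fun _ => (2 : ℝ))
    hconst hmeas.aestronglyMeasurable.restrict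
  rw [Set.uIoc_of_le ha.le]
  filter_upwards [MeasureTheory.ae_restrict_mem measurableSet_Ioc] with t ht
  exact norm_small ε lam a hlam ha hbd t ht

end Stmt19Aux

open Stmt19Aux

theorem stmt_19 :
    ∃ C : ℝ, 0 < C ∧ ∀ ε : ℝ, ε ∈ Set.Ioc (1 : ℝ) 2 → ∀ lam : ℝ, lam ≤ 0 →
      ∀ R : ℝ, 0 < R →
        |∫ t in (0 : ℝ)..R, Real.sin (lam * t ^ ε - t) / t| ≤ C := by
  refine ⟨12, by norm_num, ?_⟩
  rintro ε ⟨hε1, hε2⟩ lam hlam R hR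
  -- choose the cutoff point a
  set c : ℝ := 1 - lam with hc
  have hc1 : 1 ≤ c := by simp [hc]; linarith
  have hcpos : 0 < c := by linarith
  set b : ℝ := (c⁻¹) ^ ((ε - 1)⁻¹) with hbdef
  have hb0 : 0 < b := Real.rpow_pos_of_pos (by positivity) _
  have hb1 : b ≤ 1 :=
    Real.rpow_le_one (by positivity) (inv_le_one_of_one_le₀ hc1) (inv_nonneg.2 (by linarith))
  have hbe : b ^ (ε - 1) = c⁻¹ :=
    Real.rpow_inv_rpow (by positivity) (sub_ne_zero.2 hε1.ne')
  set a : ℝ := min R b with hadef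
  have ha : 0 < a := lt_min hR hb0
  have haR : a ≤ R := min_le_left _ _
  have hab : a ≤ b := min_le_right _ _
  have ha1 : a ≤ 1 := hab.trans hb1
  have hbd : ∀ t : ℝ, t ∈ Set.Ioc 0 a → -lam * t ^ (ε - 1) ≤ 1 := by
    intro t ht
    have h1 : t ^ (ε - 1) ≤ b ^ (ε - 1) :=
      Real.rpow_le_rpow ht.1.le (ht.2.trans hab) (by linarith)
    have h2 : -lam * t ^ (ε - 1) ≤ -lam * b ^ (ε - 1) :=
      mul_le_mul_of_nonneg_left h1 (by linarith)
    have h3 : -lam * b ^ (ε - 1) ≤ 1 := by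
      rw [hbe]
      rw [← div_eq_mul_inv, div_le_one hcpos]
      simp [hc]
    linarith
  -- split the integral
  have hint1 := integrable_small ε lam a hlam ha hbd
  have hint2 : IntervalIntegrable (fun t => Real.sin (lam * t ^ ε - t) / t) volume a R := by
    apply ContinuousOn.intervalIntegrable
    have hmem : ∀ x ∈ Set.uIcc a R, x ≠ 0 := by
      rw [Set.uIcc_of_le haR]
      intro x hx
      exact (lt_of_lt_of_le ha hx.1).ne'
    have hcrp : ContinuousOn (fun x : ℝ => x ^ ε) (Set.uIcc a R) := fun x hx =>
      (Real.continuousAt_rpow_const x ε (Or.inl (hmem x hx))).continuousWithinAt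
    exact (Real.continuous_sin.comp_continuousOn
      ((continuousOn_const.mul hcrp).sub continuousOn_id)).div continuousOn_id hmem
  have hsplit : (∫ t in (0:ℝ)..R, Real.sin (lam * t ^ ε - t) / t) =
      (∫ t in (0:ℝ)..a, Real.sin (lam * t ^ ε - t) / t) +
      ∫ t in a..R, Real.sin (lam * t ^ ε - t) / t :=
    (intervalIntegral.integral_add_adjacent_intervals hint1 hint2).symm
  rw [hsplit]
  calc |(∫ t in (0:ℝ)..a, Real.sin (lam * t ^ ε - t) / t) +
      ∫ t in a..R, Real.sin (lam * t ^ ε - t) / t|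
      ≤ |∫ t in (0:ℝ)..a, Real.sin (lam * t ^ ε - t) / t| +
        |∫ t in a..R, Real.sin (lam * t ^ ε - t) / t| := abs_add_le _ _
    _ ≤ 2 + 10 := add_le_add (small ε lam a hlam ha hbd ha1)
        (key ε lam a R hε1 hlam ha haR)
    _ = 12 := by norm_num
end
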